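/- Normal Form Theorem: for every process t of the recursion-free calculus CLL there exists s ∈ NF such that ⊢ t = s is derivable in AX_CLL (i.e., both ⊢ t ≤ s and ⊢ s ≤ t). -/
import Mathlib


open Classical

/-- Visible actions plus the invisible action τ. -/
inductive ActT (Act : Type) : Type where
  | act : Act → ActT Act
  | tau : ActT Act

/-- Processes of the recursion-free calculus CLL. -/
inductive Proc (Act : Type) : Type where
  | nil  : Proc Act                                -- 0
  | bot  : Proc Act                                -- ⊥
  | pre  : ActT Act → Proc Act → Proc Act          -- α.t
  | ec   : Proc Act → Proc Act → Proc Act          -- t □ t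
  | conj : Proc Act → Proc Act → Proc Act          -- t ∧ t
  | disj : Proc Act → Proc Act → Proc Act          -- t ∨ t
  | par  : Set Act → Proc Act → Proc Act → Proc Act -- t ∥_A t

namespace Proc

variable {Act : Type}

/-- Whether a process has a τ-transition (structural stratification used for
the negative premises of the SOS rules). -/
def hasTau : Proc Act → Prop
  | nil => False
  | bot => False
  | pre a _ => a = ActT.tau
  | ec t₁ t₂ => hasTau t₁ ∨ hasTau t₂
  | conj t₁ t₂ => hasTau t₁ ∨ hasTau t₂
  | disj _ _ => True
  | par _ t₁ t₂ => hasTau t₁ ∨ hasTau t₂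

/-- The transition relation, given by the SOS rules of CLL_R. -/
inductive Trans : Proc Act → ActT Act → Proc Act → Prop where
  | pre : Trans (pre α t) α t
  | ecL : Trans t₁ (ActT.act a) t₁' → ¬ hasTau t₂ →
      Trans (ec t₁ t₂) (ActT.act a) t₁'
  | ecR : ¬ hasTau t₁ → Trans t₂ (ActT.act a) t₂' →
      Trans (ec t₁ t₂) (ActT.act a) t₂'
  | ecTauL : Trans t₁ ActT.tau t₁' → Trans (ec t₁ t₂) ActT.tau (ec t₁' t₂)
  | ecTauR : Trans t₂ ActT.tau t₂' → Trans (ec t₁ t₂) ActT.tau (ec t₁ t₂')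
  | conjAct : Trans t₁ (ActT.act a) t₁' → Trans t₂ (ActT.act a) t₂' →
      Trans (conj t₁ t₂) (ActT.act a) (conj t₁' t₂')
  | conjTauL : Trans t₁ ActT.tau t₁' → Trans (conj t₁ t₂) ActT.tau (conj t₁' t₂)
  | conjTauR : Trans t₂ ActT.tau t₂' → Trans (conj t₁ t₂) ActT.tau (conj t₁ t₂')
  | disjL : Trans (disj t₁ t₂) ActT.tau t₁
  | disjR : Trans (disj t₁ t₂) ActT.tau t₂
  | parTauL : Trans t₁ ActT.tau t₁' → Trans (par A t₁ t₂) ActT.tau (par A t₁' t₂)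
  | parTauR : Trans t₂ ActT.tau t₂' → Trans (par A t₁ t₂) ActT.tau (par A t₁ t₂')
  | parL : a ∉ A → Trans t₁ (ActT.act a) t₁' → ¬ hasTau t₂ →
      Trans (par A t₁ t₂) (ActT.act a) (par A t₁' t₂)
  | parR : a ∉ A → ¬ hasTau t₁ → Trans t₂ (ActT.act a) t₂' →
      Trans (par A t₁ t₂) (ActT.act a) (par A t₁ t₂')
  | parSync : a ∈ A → Trans t₁ (ActT.act a) t₁' → Trans t₂ (ActT.act a) t₂' →
      Trans (par A t₁ t₂) (ActT.act a) (par A t₁' t₂')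

/-- The ready set I(p). -/
def ready (p : Proc Act) : Set (ActT Act) := {α | ∃ q, Trans p α q}

/-- p is stable if it has no τ-transition. -/
def Stable (p : Proc Act) : Prop := ∀ q, ¬ Trans p ActT.tau q

/-- The inconsistency predicate F, as the least predicate closed under the
predicative rules of CLL_R. -/
inductive Fp : Proc Act → Prop where
  | bot : Fp bot
  | pre : Fp t → Fp (pre α t)
  | disj : Fp t₁ → Fp t₂ → Fp (disj t₁ t₂)
  | ecL : Fp t₁ → Fp (ec t₁ t₂)
  | ecR : Fp t₂ → Fp (ec t₁ t₂)
  | parL : Fp t₁ → Fp (par A t₁ t₂)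
  | parR : Fp t₂ → Fp (par A t₁ t₂)
  | conjL : Fp t₁ → Fp (conj t₁ t₂)
  | conjR : Fp t₂ → Fp (conj t₁ t₂)
  | conjReady : Stable (conj t₁ t₂) → ready t₁ ≠ ready t₂ → Fp (conj t₁ t₂)
  | conjSucc : Trans (conj t₁ t₂) α s → (∀ y, Trans (conj t₁ t₂) α y → Fp y) →
      Fp (conj t₁ t₂)
  | conjStable :
      (∀ y, Relation.ReflTransGen (fun x z => Trans x ActT.tau z) (conj t₁ t₂) y →
        Stable y → Fp y) →
      Fp (conj t₁ t₂)

/-- One τ-step with both endpoints consistent. -/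
def tauStepF (p q : Proc Act) : Prop := Trans p ActT.tau q ∧ ¬ Fp p ∧ ¬ Fp q

/-- p ⇒_F| q : a sequence of τ-transitions from p to q, all states outside F,
with q stable. -/
def epsF (p q : Proc Act) : Prop :=
  Relation.ReflTransGen tauStepF p q ∧ ¬ Fp p ∧ ¬ Fp q ∧ Stable q

/-- p =a⇒_F| q. -/
def wkF (a : Act) (p q : Proc Act) : Prop :=
  ∃ r s, Relation.ReflTransGen tauStepF p r ∧ ¬ Fp p ∧ ¬ Fp r ∧
    Trans r (ActT.act a) s ∧ ¬ Fp s ∧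
    Relation.ReflTransGen tauStepF s q ∧ ¬ Fp q ∧ Stable q

/-- R is a stable ready simulation. -/
def StableRS (R : Proc Act → Proc Act → Prop) : Prop :=
  ∀ p q, R p q →
    Stable p ∧ Stable q ∧
    (¬ Fp p → ¬ Fp q) ∧
    (∀ a p', wkF a p p' → ∃ q', wkF a q q' ∧ R p' q') ∧
    (¬ Fp p → ready p = ready q)

/-- p ⊏̃_RS q. -/
def rsLT (p q : Proc Act) : Prop := ∃ R, StableRS R ∧ R p q

/-- p ⊑_RS q. -/
def rsLE (p q : Proc Act) : Prop :=
  ∀ p', epsF p p' → ∃ q', epsF q q' ∧ rsLT p' q'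

/-- p =_RS q. -/
def rsEq (p q : Proc Act) : Prop := rsLE p q ∧ rsLE q p

/-- Basic process terms T(Σ_B): no ⊥ and no ∧. -/
inductive Basic : Proc Act → Prop where
  | nil : Basic nil
  | pre : Basic t → Basic (pre α t)
  | disj : Basic t₁ → Basic t₂ → Basic (disj t₁ t₂)
  | ec : Basic t₁ → Basic t₂ → Basic (ec t₁ t₂)
  | par : Basic t₁ → Basic t₂ → Basic (par A t₁ t₂)

/-- General external choice □ over a finite sequence (left-nested). -/
def ecList : List (Proc Act) → Proc Act
  | [] => nil
  | t :: ts => ts.foldl ec t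

/-- General disjunction ⋁ over a nonempty finite sequence (left-nested). -/
def djList : List (Proc Act) → Proc Act
  | [] => bot
  | t :: ts => ts.foldl disj t

/-- □_{i<n} a_i.t_i for a sequence of prefixed terms. -/
def ecPre (l : List (Act × Proc Act)) : Proc Act :=
  ecList (l.map fun x => pre (ActT.act x.1) x.2)

/-- The expansion term E = ((□Ω₁) □ (□Ω₂)) □ (□Ω₃). -/
noncomputable def expTerm (A : Set Act) (l₁ l₂ : List (Act × Proc Act)) : Proc Act :=
  ec (ec
      (ecList ((l₁.filter fun x => decide (x.1 ∉ A)).map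
        fun x => pre (ActT.act x.1) (par A x.2 (ecPre l₂))))
      (ecList ((l₂.filter fun x => decide (x.1 ∉ A)).map
        fun x => pre (ActT.act x.1) (par A (ecPre l₁) x.2))))
    (ecList (l₁.flatMap fun x =>
      (l₂.filter fun y => decide (y.1 = x.1 ∧ x.1 ∈ A)).map
        fun y => pre (ActT.act x.1) (par A x.2 y.2)))

/-- Normal forms NF_B. -/
inductive NFB : Proc Act → Prop where
  | mk (ls : List (List (Act × Proc Act))) (hne : ls ≠ [])
      (hnodup : ∀ l ∈ ls, (l.map Prod.fst).Nodup)
      (hsub : ∀ l ∈ ls, ∀ x ∈ l, NFB x.2) :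
      NFB (djList (ls.map ecPre))

/-- NF = NF_B ∪ {⊥}. -/
def NF (p : Proc Act) : Prop := NFB p ∨ p = bot

/-- Derivability ⊢ t ≤ t' in the proof system AX_CLL. -/
inductive Deriv : Proc Act → Proc Act → Prop where
  | refl (t) : Deriv t t
  | trans : Deriv t t' → Deriv t' t'' → Deriv t t''
  | mono_pre : Deriv t t' → Deriv (pre α t) (pre α t')
  | mono_ec : Deriv s s' → Deriv t t' → Deriv (ec s t) (ec s' t')
  | mono_conj : Deriv s s' → Deriv t t' → Deriv (conj s t) (conj s' t')
  | mono_disj : Deriv s s' → Deriv t t' → Deriv (disj s t) (disj s' t')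
  | mono_par : Deriv s s' → Deriv t t' → Deriv (par A s t) (par A s' t')
  -- external choice
  | ec_comm : Deriv (ec x y) (ec y x)
  | ec_assoc₁ : Deriv (ec (ec x y) z) (ec x (ec y z))
  | ec_assoc₂ : Deriv (ec x (ec y z)) (ec (ec x y) z)
  | ec_idem₁ : Deriv (ec x x) x
  | ec_idem₂ : Deriv x (ec x x)
  | ec_nil₁ : Deriv (ec x nil) x
  | ec_nil₂ : Deriv x (ec x nil)
  | ec_bot₁ : Deriv (ec x bot) bot
  | ec_bot₂ : Deriv bot (ec x bot)
  -- disjunction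
  | disj_comm : Deriv (disj x y) (disj y x)
  | disj_assoc₁ : Deriv (disj x (disj y z)) (disj (disj x y) z)
  | disj_assoc₂ : Deriv (disj (disj x y) z) (disj x (disj y z))
  | disj_idem₁ : Deriv (disj x x) x
  | disj_idem₂ : Deriv x (disj x x)
  | disj_bot₁ : Deriv (disj x bot) x
  | disj_bot₂ : Deriv x (disj x bot)
  | disj_le : Deriv x (disj x y)
  -- conjunction
  | conj_comm : Deriv (conj x y) (conj y x)
  | conj_idem₁ : Deriv (conj x x) x
  | conj_idem₂ : Deriv x (conj x x)
  | conj_bot₁ : Deriv (conj x bot) bot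
  | conj_bot₂ : Deriv bot (conj x bot)
  -- prefixing
  | pre_bot₁ : Deriv (pre (ActT.act a) bot) bot
  | pre_bot₂ : Deriv bot (pre (ActT.act a) bot)
  | tau_pre₁ : Deriv (pre ActT.tau x) x
  | tau_pre₂ : Deriv x (pre ActT.tau x)
  -- parallel
  | par_comm : Deriv (par A x y) (par A y x)
  | par_bot₁ : Deriv (par A x bot) bot
  | par_bot₂ : Deriv bot (par A x bot)
  -- distribution over disjunction
  | ds_ec : Deriv (ec x (disj y z)) (disj (ec x y) (ec x z))
  | ds_conj : Deriv (conj x (disj y z)) (disj (conj x y) (conj x z))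
  | ds_par : Deriv (par A x (disj y z)) (disj (par A x y) (par A x z))
  | ds_pre : Basic x → Basic y →
      Deriv (pre (ActT.act a) (disj x y)) (ec (pre (ActT.act a) x) (pre (ActT.act a) y))
  -- external choice and conjunction
  | ecc1₁ (l₁ l₂ : List (Act × Proc Act)) :
      {a | a ∈ l₁.map Prod.fst} ≠ {a | a ∈ l₂.map Prod.fst} →
      Deriv (conj (ecPre l₁) (ecPre l₂)) bot
  | ecc1₂ (l₁ l₂ : List (Act × Proc Act)) :
      {a | a ∈ l₁.map Prod.fst} ≠ {a | a ∈ l₂.map Prod.fst} →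
      Deriv bot (conj (ecPre l₁) (ecPre l₂))
  | ecc2 (l : List (Act × Proc Act × Proc Act)) :
      Deriv (ecPre (l.map fun x => (x.1, conj x.2.1 x.2.2)))
            (conj (ecPre (l.map fun x => (x.1, x.2.1)))
                  (ecPre (l.map fun x => (x.1, x.2.2))))
  | ecc3 (l : List (Act × Proc Act × Proc Act)) :
      (l.map Prod.fst).Nodup →
      Deriv (conj (ecPre (l.map fun x => (x.1, x.2.1)))
                  (ecPre (l.map fun x => (x.1, x.2.2))))
            (ecPre (l.map fun x => (x.1, conj x.2.1 x.2.2)))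
  -- expansion
  | exp1 (A : Set Act) (l₁ l₂ : List (Act × Proc Act)) :
      Deriv (par A (ecPre l₁) (ecPre l₂)) (expTerm A l₁ l₂)
  | exp2 (A : Set Act) (l₁ l₂ : List (Act × Proc Act)) :
      (∀ x ∈ l₁, Basic x.2) → (∀ x ∈ l₂, Basic x.2) →
      Deriv (expTerm A l₁ l₂) (par A (ecPre l₁) (ecPre l₂))

end Proc

namespace Proc

variable {Act : Type}

/-- Provable equality. -/
def DEq (s t : Proc Act) : Prop := Deriv s t ∧ Deriv t s

namespace DEq

theorem rfl {t : Proc Act} : DEq t t := ⟨Deriv.refl t, Deriv.refl t⟩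

theorem symm {s t : Proc Act} (h : DEq s t) : DEq t s := ⟨h.2, h.1⟩

theorem trans {s t u : Proc Act} (h : DEq s t) (h' : DEq t u) : DEq s u :=
  ⟨Deriv.trans h.1 h'.1, Deriv.trans h'.2 h.2⟩

theorem pre {α : ActT Act} {s t : Proc Act} (h : DEq s t) : DEq (pre α s) (pre α t) :=
  ⟨Deriv.mono_pre h.1, Deriv.mono_pre h.2⟩

theorem ec {s s' t t' : Proc Act} (h : DEq s s') (h' : DEq t t') : DEq (ec s t) (ec s' t') :=
  ⟨Deriv.mono_ec h.1 h'.1, Deriv.mono_ec h.2 h'.2⟩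

theorem conj {s s' t t' : Proc Act} (h : DEq s s') (h' : DEq t t') :
    DEq (conj s t) (conj s' t') :=
  ⟨Deriv.mono_conj h.1 h'.1, Deriv.mono_conj h.2 h'.2⟩

theorem disj {s s' t t' : Proc Act} (h : DEq s s') (h' : DEq t t') :
    DEq (disj s t) (disj s' t') :=
  ⟨Deriv.mono_disj h.1 h'.1, Deriv.mono_disj h.2 h'.2⟩

theorem par {A : Set Act} {s s' t t' : Proc Act} (h : DEq s s') (h' : DEq t t') :
    DEq (par A s t) (par A s' t') :=
  ⟨Deriv.mono_par h.1 h'.1, Deriv.mono_par h.2 h'.2⟩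

end DEq

theorem deq_ec_comm {x y : Proc Act} : DEq (ec x y) (ec y x) := ⟨Deriv.ec_comm, Deriv.ec_comm⟩
theorem deq_ec_assoc {x y z : Proc Act} : DEq (ec (ec x y) z) (ec x (ec y z)) :=
  ⟨Deriv.ec_assoc₁, Deriv.ec_assoc₂⟩
theorem deq_ec_nil {x : Proc Act} : DEq (ec x nil) x := ⟨Deriv.ec_nil₁, Deriv.ec_nil₂⟩
theorem deq_ec_bot {x : Proc Act} : DEq (ec x bot) bot := ⟨Deriv.ec_bot₁, Deriv.ec_bot₂⟩
theorem deq_disj_comm {x y : Proc Act} : DEq (disj x y) (disj y x) :=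
  ⟨Deriv.disj_comm, Deriv.disj_comm⟩
theorem deq_disj_assoc {x y z : Proc Act} : DEq (disj (disj x y) z) (disj x (disj y z)) :=
  ⟨Deriv.disj_assoc₂, Deriv.disj_assoc₁⟩
theorem deq_disj_bot {x : Proc Act} : DEq (disj x bot) x := ⟨Deriv.disj_bot₁, Deriv.disj_bot₂⟩
theorem deq_conj_bot {x : Proc Act} : DEq (conj x bot) bot := ⟨Deriv.conj_bot₁, Deriv.conj_bot₂⟩
theorem deq_conj_comm {x y : Proc Act} : DEq (conj x y) (conj y x) :=
  ⟨Deriv.conj_comm, Deriv.conj_comm⟩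
theorem deq_par_comm {A : Set Act} {x y : Proc Act} : DEq (par A x y) (par A y x) :=
  ⟨Deriv.par_comm, Deriv.par_comm⟩
theorem deq_par_bot {A : Set Act} {x : Proc Act} : DEq (par A x bot) bot :=
  ⟨Deriv.par_bot₁, Deriv.par_bot₂⟩
theorem deq_pre_bot {a : Act} : DEq (pre (ActT.act a) (bot : Proc Act)) bot :=
  ⟨Deriv.pre_bot₁, Deriv.pre_bot₂⟩
theorem deq_tau_pre {x : Proc Act} : DEq (pre ActT.tau x) x := ⟨Deriv.tau_pre₁, Deriv.tau_pre₂⟩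

/-- least upper bound property of disjunction -/
theorem disj_lub {x y z : Proc Act} (h : Deriv x z) (h' : Deriv y z) :
    Deriv (disj x y) z :=
  Deriv.trans (Deriv.mono_disj h h') Deriv.disj_idem₁

/-- merging two identical prefixes -/
theorem deq_pre_merge {a : Act} {x y : Proc Act} (hx : Basic x) (hy : Basic y) :
    DEq (ec (pre (ActT.act a) x) (pre (ActT.act a) y)) (pre (ActT.act a) (disj x y)) := by
  constructor
  · exact Deriv.trans
      (Deriv.mono_ec (Deriv.mono_pre Deriv.disj_le)
        (Deriv.mono_pre (Deriv.trans Deriv.disj_le Deriv.disj_comm)))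
      Deriv.ec_idem₁
  · exact Deriv.ds_pre hx hy

/- fold lemmas -/

theorem deq_foldl_ec_congr {u v : Proc Act} (l : List (Proc Act)) (h : DEq u v) :
    DEq (l.foldl ec u) (l.foldl ec v) := by
  induction l generalizing u v with
  | nil => exact h
  | cons t ts ih => exact ih (DEq.ec h DEq.rfl)

theorem deq_foldl_disj_congr {u v : Proc Act} (l : List (Proc Act)) (h : DEq u v) :
    DEq (l.foldl disj u) (l.foldl disj v) := by
  induction l generalizing u v with
  | nil => exact h
  | cons t ts ih => exact ih (DEq.disj h DEq.rfl)

theorem deq_foldl_ec_pull {x y : Proc Act} (l : List (Proc Act)) :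
    DEq (l.foldl ec (ec x y)) (ec x (l.foldl ec y)) := by
  induction l generalizing y with
  | nil => exact DEq.rfl
  | cons t ts ih =>
    exact DEq.trans (deq_foldl_ec_congr ts deq_ec_assoc) (ih (y := ec y t))

theorem deq_foldl_disj_pull {x y : Proc Act} (l : List (Proc Act)) :
    DEq (l.foldl disj (disj x y)) (disj x (l.foldl disj y)) := by
  induction l generalizing y with
  | nil => exact DEq.rfl
  | cons t ts ih =>
    exact DEq.trans (deq_foldl_disj_congr ts deq_disj_assoc) (ih (y := disj y t))

theorem deq_ecList_cons {t : Proc Act} {ts : List (Proc Act)} :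
    DEq (ecList (t :: ts)) (ec t (ecList ts)) := by
  cases ts with
  | nil => exact deq_ec_nil.symm
  | cons u us => exact deq_foldl_ec_pull us

theorem deq_djList_cons {t : Proc Act} {ts : List (Proc Act)} :
    DEq (djList (t :: ts)) (disj t (djList ts)) := by
  cases ts with
  | nil => exact deq_disj_bot.symm
  | cons u us => exact deq_foldl_disj_pull us

local infix:50 " ≋ " => Proc.DEq

instance : _root_.Trans (α := Proc Act) (β := Proc Act) (γ := Proc Act) DEq DEq DEq :=
  ⟨DEq.trans⟩

theorem deq_ecList_append (L₁ L₂ : List (Proc Act)) :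
    DEq (ecList (L₁ ++ L₂)) (ec (ecList L₁) (ecList L₂)) := by
  induction L₁ with
  | nil => exact (deq_ec_comm.trans deq_ec_nil).symm
  | cons t ts ih =>
    calc ecList (t :: (ts ++ L₂)) ≋ ec t (ecList (ts ++ L₂)) := deq_ecList_cons
      _ ≋ ec t (ec (ecList ts) (ecList L₂)) := DEq.ec DEq.rfl ih
      _ ≋ ec (ec t (ecList ts)) (ecList L₂) := deq_ec_assoc.symm
      _ ≋ ec (ecList (t :: ts)) (ecList L₂) := DEq.ec deq_ecList_cons.symm DEq.rfl

theorem deq_djList_append (L₁ L₂ : List (Proc Act)) :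
    DEq (djList (L₁ ++ L₂)) (disj (djList L₁) (djList L₂)) := by
  induction L₁ with
  | nil => exact (deq_disj_comm.trans deq_disj_bot).symm
  | cons t ts ih =>
    calc djList (t :: (ts ++ L₂)) ≋ disj t (djList (ts ++ L₂)) := deq_djList_cons
      _ ≋ disj t (disj (djList ts) (djList L₂)) := DEq.disj DEq.rfl ih
      _ ≋ disj (disj t (djList ts)) (djList L₂) := deq_disj_assoc.symm
      _ ≋ disj (djList (t :: ts)) (djList L₂) := DEq.disj deq_djList_cons.symm DEq.rfl

theorem deq_ecList_perm {L₁ L₂ : List (Proc Act)} (h : L₁.Perm L₂) :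
    DEq (ecList L₁) (ecList L₂) := by
  induction h with
  | nil => exact DEq.rfl
  | cons x _ ih => exact deq_ecList_cons.trans ((DEq.ec DEq.rfl ih).trans deq_ecList_cons.symm)
  | swap x y l =>
    calc ecList (y :: x :: l) ≋ ec y (ec x (ecList l)) :=
          deq_ecList_cons.trans (DEq.ec DEq.rfl deq_ecList_cons)
      _ ≋ ec (ec y x) (ecList l) := deq_ec_assoc.symm
      _ ≋ ec (ec x y) (ecList l) := DEq.ec deq_ec_comm DEq.rfl
      _ ≋ ec x (ec y (ecList l)) := deq_ec_assoc
      _ ≋ ecList (x :: y :: l) :=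
          (deq_ecList_cons.trans (DEq.ec DEq.rfl deq_ecList_cons)).symm
  | trans _ _ ih₁ ih₂ => exact ih₁.trans ih₂

theorem forall₂_deq_of_map {β : Type} {L : List β} {f g : β → Proc Act}
    (h : ∀ a ∈ L, DEq (f a) (g a)) : List.Forall₂ DEq (L.map f) (L.map g) := by
  induction L with
  | nil => simp
  | cons a l ih =>
    simp only [List.map_cons, List.forall₂_cons]
    exact ⟨h a (by simp), ih fun a ha => h a (by simp [ha])⟩

theorem deq_ecList_congr {L₁ L₂ : List (Proc Act)} (h : List.Forall₂ DEq L₁ L₂) :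
    DEq (ecList L₁) (ecList L₂) := by
  induction h with
  | nil => exact DEq.rfl
  | cons h _ ih =>
    exact deq_ecList_cons.trans ((DEq.ec h ih).trans deq_ecList_cons.symm)

theorem deq_djList_congr {L₁ L₂ : List (Proc Act)} (h : List.Forall₂ DEq L₁ L₂) :
    DEq (djList L₁) (djList L₂) := by
  induction h with
  | nil => exact DEq.rfl
  | cons h _ ih =>
    exact deq_djList_cons.trans ((DEq.disj h ih).trans deq_djList_cons.symm)

theorem deq_djList_flatten (Ls : List (List (Proc Act))) :
    DEq (djList (Ls.map djList)) (djList Ls.flatten) := by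
  induction Ls with
  | nil => exact DEq.rfl
  | cons l Ls ih =>
    calc djList (djList l :: Ls.map djList) ≋ disj (djList l) (djList (Ls.map djList)) :=
          deq_djList_cons
      _ ≋ disj (djList l) (djList Ls.flatten) := DEq.disj DEq.rfl ih
      _ ≋ djList ((l :: Ls).flatten) := by
          rw [List.flatten_cons]; exact (deq_djList_append _ _).symm

/- ecPre lemmas -/

theorem deq_ecPre_cons {a : Act} {x : Proc Act} {l : List (Act × Proc Act)} :
    DEq (ecPre ((a, x) :: l)) (ec (pre (ActT.act a) x) (ecPre l)) := deq_ecList_cons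

theorem deq_ecPre_append (l₁ l₂ : List (Act × Proc Act)) :
    DEq (ecPre (l₁ ++ l₂)) (ec (ecPre l₁) (ecPre l₂)) := by
  unfold ecPre
  rw [List.map_append]
  exact deq_ecList_append _ _

theorem deq_ecPre_perm {l₁ l₂ : List (Act × Proc Act)} (h : l₁.Perm l₂) :
    DEq (ecPre l₁) (ecPre l₂) := deq_ecList_perm (h.map _)

/- size -/

def psize : Proc Act → ℕ
  | nil => 1
  | bot => 1
  | pre _ t => psize t + 1
  | ec a b => psize a + psize b + 1
  | conj a b => psize a + psize b + 1
  | disj a b => psize a + psize b + 1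
  | par _ a b => psize a + psize b + 1

theorem psize_le_foldl_ec (ts : List (Proc Act)) (acc : Proc Act) :
    psize acc ≤ psize (ts.foldl ec acc) := by
  induction ts generalizing acc with
  | nil => exact le_refl _
  | cons t ts ih =>
    exact le_trans (by simp [psize]; omega) (ih (ec acc t))

theorem psize_le_foldl_disj (ts : List (Proc Act)) (acc : Proc Act) :
    psize acc ≤ psize (ts.foldl disj acc) := by
  induction ts generalizing acc with
  | nil => exact le_refl _
  | cons t ts ih =>
    exact le_trans (by simp [psize]; omega) (ih (disj acc t))

theorem mem_psize_le_foldl_ec {p : Proc Act} : ∀ {ts : List (Proc Act)} (acc : Proc Act),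
    p ∈ ts → psize p ≤ psize (ts.foldl ec acc) := by
  intro ts
  induction ts with
  | nil => intro acc h; cases h
  | cons t ts ih =>
    intro acc h
    rcases List.mem_cons.mp h with h | h
    · subst h; exact le_trans (by simp [psize]; omega) (psize_le_foldl_ec ts (ec acc p))
    · exact ih (ec acc t) h

theorem mem_psize_le_foldl_disj {p : Proc Act} : ∀ {ts : List (Proc Act)} (acc : Proc Act),
    p ∈ ts → psize p ≤ psize (ts.foldl disj acc) := by
  intro ts
  induction ts with
  | nil => intro acc h; cases h
  | cons t ts ih =>
    intro acc h
    rcases List.mem_cons.mp h with h | h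
    · subst h; exact le_trans (by simp [psize]; omega) (psize_le_foldl_disj ts (disj acc p))
    · exact ih (disj acc t) h

theorem mem_psize_le_ecList {p : Proc Act} {ts : List (Proc Act)} (h : p ∈ ts) :
    psize p ≤ psize (ecList ts) := by
  cases ts with
  | nil => cases h
  | cons t ts =>
    rcases List.mem_cons.mp h with h | h
    · subst h; exact psize_le_foldl_ec ts p
    · exact mem_psize_le_foldl_ec t h

theorem mem_psize_le_djList {p : Proc Act} {ts : List (Proc Act)} (h : p ∈ ts) :
    psize p ≤ psize (djList ts) := by
  cases ts with
  | nil => cases h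
  | cons t ts =>
    rcases List.mem_cons.mp h with h | h
    · subst h; exact psize_le_foldl_disj ts p
    · exact mem_psize_le_foldl_disj t h

theorem snd_psize_lt_ecPre {x : Act × Proc Act} {l : List (Act × Proc Act)} (h : x ∈ l) :
    psize x.2 < psize (ecPre l) := by
  have : pre (ActT.act x.1) x.2 ∈ l.map fun y => pre (ActT.act y.1) y.2 :=
    List.mem_map.mpr ⟨x, h, rfl⟩
  have h2 := mem_psize_le_ecList (ts := l.map fun y => pre (ActT.act y.1) y.2) this
  have h3 : psize (ecPre l) = psize (ecList (l.map fun y => pre (ActT.act y.1) y.2)) := rfl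
  simp [psize] at h2
  omega

/- Basic closure lemmas -/

theorem basic_foldl_ec {acc : Proc Act} {ts : List (Proc Act)}
    (h : Basic acc) (h' : ∀ t ∈ ts, Basic t) : Basic (ts.foldl ec acc) := by
  induction ts generalizing acc with
  | nil => exact h
  | cons t ts ih =>
    exact ih (Basic.ec h (h' t (by simp))) (fun u hu => h' u (by simp [hu]))

theorem basic_foldl_disj {acc : Proc Act} {ts : List (Proc Act)}
    (h : Basic acc) (h' : ∀ t ∈ ts, Basic t) : Basic (ts.foldl disj acc) := by
  induction ts generalizing acc with
  | nil => exact h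
  | cons t ts ih =>
    exact ih (Basic.disj h (h' t (by simp))) (fun u hu => h' u (by simp [hu]))

theorem basic_ecList {ts : List (Proc Act)} (h : ∀ t ∈ ts, Basic t) : Basic (ecList ts) := by
  cases ts with
  | nil => exact Basic.nil
  | cons t ts =>
    exact basic_foldl_ec (h t (by simp)) (fun u hu => h u (by simp [hu]))

theorem basic_djList {ts : List (Proc Act)} (hne : ts ≠ []) (h : ∀ t ∈ ts, Basic t) :
    Basic (djList ts) := by
  cases ts with
  | nil => exact absurd rfl hne
  | cons t ts =>
    exact basic_foldl_disj (h t (by simp)) (fun u hu => h u (by simp [hu]))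

theorem basic_ecPre {l : List (Act × Proc Act)} (h : ∀ x ∈ l, Basic x.2) :
    Basic (ecPre l) := by
  apply basic_ecList
  intro t ht
  obtain ⟨x, hx, rfl⟩ := List.mem_map.mp ht
  exact Basic.pre (h x hx)

theorem NFB.basic {p : Proc Act} (h : NFB p) : Basic p := by
  induction h with
  | mk ls hne hnodup hsub ih =>
    apply basic_djList
    · simpa using hne
    · intro t ht
      obtain ⟨m, hm, rfl⟩ := List.mem_map.mp ht
      exact basic_ecPre fun x hx => ih m hm x hx

theorem NFB_nil : NFB (nil : Proc Act) := by
  have h : (nil : Proc Act) = djList (([([] : List (Act × Proc Act))]).map ecPre) := rfl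
  rw [h]
  exact NFB.mk [[]] (by simp) (by simp) (by simp)

theorem NFB.single {l : List (Act × Proc Act)} (hnodup : (l.map Prod.fst).Nodup)
    (hsub : ∀ x ∈ l, NFB x.2) : NFB (ecPre l) := by
  have h : ecPre l = djList ([l].map ecPre) := rfl
  rw [h]
  exact NFB.mk [l] (by simp) (by simpa using hnodup) (by simpa using hsub)

theorem NFB.disj_norm {p q : Proc Act} (hp : NFB p) (hq : NFB q) :
    ∃ s, NFB s ∧ DEq (disj p q) s := by
  cases hp with
  | mk ls₁ hne₁ hnodup₁ hsub₁ =>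
    cases hq with
    | mk ls₂ hne₂ hnodup₂ hsub₂ =>
      refine ⟨djList ((ls₁ ++ ls₂).map ecPre),
        NFB.mk _ (by simp [hne₁]) ?_ ?_, ?_⟩
      · intro l hl
        rcases List.mem_append.mp hl with h | h
        · exact hnodup₁ l h
        · exact hnodup₂ l h
      · intro l hl
        rcases List.mem_append.mp hl with h | h
        · exact hsub₁ l h
        · exact hsub₂ l h
      · rw [List.map_append]
        exact (deq_djList_append _ _).symm

theorem djList_norm : ∀ (L : List (Proc Act)), L ≠ [] → (∀ p ∈ L, NFB p) →
    ∃ s, NFB s ∧ DEq (djList L) s := by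
  intro L
  induction L with
  | nil => intro h; exact absurd rfl h
  | cons p L ih =>
    intro _ h
    cases L with
    | nil => exact ⟨p, h p (by simp), DEq.rfl⟩
    | cons q L =>
      obtain ⟨s', hs', hdeq⟩ := ih (by simp) (fun r hr => h r (by simp [hr]))
      obtain ⟨s, hs, hdeq₂⟩ := NFB.disj_norm (h p (by simp)) hs'
      exact ⟨s, hs, deq_djList_cons.trans ((DEq.disj DEq.rfl hdeq).trans hdeq₂)⟩

theorem djList_normNF : ∀ (L : List (Proc Act)), L ≠ [] → (∀ p ∈ L, NF p) →
    ∃ s, NF s ∧ DEq (djList L) s := by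
  intro L
  induction L with
  | nil => intro h; exact absurd rfl h
  | cons p L ih =>
    intro _ h
    cases L with
    | nil => exact ⟨p, h p (by simp), DEq.rfl⟩
    | cons q L =>
      obtain ⟨s', hs', hdeq⟩ := ih (by simp) (fun r hr => h r (by simp [hr]))
      have hstep : DEq (djList (p :: q :: L)) (disj p s') :=
        deq_djList_cons.trans (DEq.disj DEq.rfl hdeq)
      rcases h p (by simp) with hp | hp
      · rcases hs' with hs' | hs'
        · obtain ⟨s, hs, hdeq₂⟩ := NFB.disj_norm hp hs'
          exact ⟨s, Or.inl hs, hstep.trans hdeq₂⟩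
        · subst hs'
          exact ⟨p, Or.inl hp, hstep.trans deq_disj_bot⟩
      · subst hp
        exact ⟨s', hs', hstep.trans (deq_disj_comm.trans deq_disj_bot)⟩

theorem ecPre_collapse_bot : ∀ (l : List (Act × Proc Act)),
    (∃ x ∈ l, x.2 = bot) → DEq (ecPre l) bot := by
  intro l
  induction l with
  | nil => rintro ⟨x, hx, -⟩; cases hx
  | cons y l ih =>
    rintro ⟨x, hx, hbot⟩
    rcases List.mem_cons.mp hx with h | h
    · subst h
      obtain ⟨a, x2⟩ := x
      simp only at hbot
      subst hbot
      calc ecPre ((a, bot) :: l) ≋ ec (pre (ActT.act a) bot) (ecPre l) := deq_ecPre_cons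
        _ ≋ ec bot (ecPre l) := DEq.ec deq_pre_bot DEq.rfl
        _ ≋ ec (ecPre l) bot := deq_ec_comm
        _ ≋ bot := deq_ec_bot
    · obtain ⟨a, x2⟩ := y
      calc ecPre ((a, x2) :: l) ≋ ec (pre (ActT.act a) x2) (ecPre l) := deq_ecPre_cons
        _ ≋ ec (pre (ActT.act a) x2) bot := DEq.ec DEq.rfl (ih ⟨x, h, hbot⟩)
        _ ≋ bot := deq_ec_bot

theorem menu_chooseNF : ∀ (l : List (Act × Proc Act)),
    (∀ x ∈ l, ∃ y, NF y ∧ DEq x.2 y) →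
    ∃ l', l'.map Prod.fst = l.map Prod.fst ∧ (∀ x ∈ l', NF x.2) ∧
      DEq (ecPre l) (ecPre l') := by
  intro l
  induction l with
  | nil => exact fun _ => ⟨[], rfl, by simp, DEq.rfl⟩
  | cons x l ih =>
    intro h
    obtain ⟨y, hy, hdeq⟩ := h x (by simp)
    obtain ⟨l', hkeys, hl', hdeq'⟩ := ih (fun z hz => h z (by simp [hz]))
    refine ⟨(x.1, y) :: l', by simp [hkeys], ?_, ?_⟩
    · intro z hz
      rcases List.mem_cons.mp hz with h' | h'
      · subst h'; exact hy
      · exact hl' z h'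
    · obtain ⟨a, x2⟩ := x
      calc ecPre ((a, x2) :: l) ≋ ec (pre (ActT.act a) x2) (ecPre l) := deq_ecPre_cons
        _ ≋ ec (pre (ActT.act a) y) (ecPre l') := DEq.ec (DEq.pre hdeq) hdeq'
        _ ≋ ecPre ((a, y) :: l') := deq_ecPre_cons.symm

theorem keys_nodup_unique {l : List (Act × Proc Act)} (h : (l.map Prod.fst).Nodup)
    {a : Act} {y z : Proc Act} (hy : (a, y) ∈ l) (hz : (a, z) ∈ l) : y = z := by
  induction l with
  | nil => cases hy
  | cons w l ih =>
    simp only [List.map_cons, List.nodup_cons] at h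
    rcases List.mem_cons.mp hy with h₁ | h₁ <;> rcases List.mem_cons.mp hz with h₂ | h₂
    · exact (Prod.ext_iff.mp (h₁.trans h₂.symm)).2
    · exact absurd (List.mem_map.mpr ⟨(a, z), h₂, by rw [← h₁]⟩) h.1
    · exact absurd (List.mem_map.mpr ⟨(a, y), h₁, by rw [← h₂]⟩) h.1
    · exact ih h.2 h₁ h₂

theorem merge_same : ∀ (ra : List (Act × Proc Act)) (a : Act) (x : Proc Act),
    (∀ y ∈ ra, y.1 = a) → Basic x → (∀ y ∈ ra, Basic y.2) →
    DEq (ec (pre (ActT.act a) x) (ecPre ra))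
        (pre (ActT.act a) (djList (x :: ra.map Prod.snd))) := by
  intro ra
  induction ra with
  | nil => exact fun a x _ _ _ => deq_ec_nil
  | cons w ra ih =>
    intro a x hkeys hx hbasic
    obtain ⟨b, y⟩ := w
    have hb : b = a := hkeys (b, y) (by simp)
    subst hb
    have step : DEq (ec (pre (ActT.act b) x) (ecPre ((b, y) :: ra)))
        (ec (pre (ActT.act b) (disj x y)) (ecPre ra)) := by
      calc ec (pre (ActT.act b) x) (ecPre ((b, y) :: ra))
          ≋ ec (pre (ActT.act b) x) (ec (pre (ActT.act b) y) (ecPre ra)) :=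
            DEq.ec DEq.rfl deq_ecPre_cons
        _ ≋ ec (ec (pre (ActT.act b) x) (pre (ActT.act b) y)) (ecPre ra) := deq_ec_assoc.symm
        _ ≋ ec (pre (ActT.act b) (disj x y)) (ecPre ra) :=
            DEq.ec (deq_pre_merge hx (hbasic (b, y) (by simp))) DEq.rfl
    have hih := ih b (disj x y) (fun z hz => hkeys z (by simp [hz]))
      (Basic.disj hx (hbasic (b, y) (by simp))) (fun z hz => hbasic z (by simp [hz]))
    exact step.trans hih

theorem menu_nodup : ∀ (n : ℕ) (l : List (Act × Proc Act)), l.length ≤ n →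
    (∀ x ∈ l, NFB x.2) →
    ∃ l', (l'.map Prod.fst).Nodup ∧ (∀ x ∈ l', NFB x.2) ∧
      (∀ a ∈ l'.map Prod.fst, a ∈ l.map Prod.fst) ∧ DEq (ecPre l) (ecPre l') := by
  intro n
  induction n with
  | zero =>
    intro l hl _
    have : l = [] := List.length_eq_zero_iff.mp (Nat.le_zero.mp hl)
    subst this
    exact ⟨[], by simp, by simp, by simp, DEq.rfl⟩
  | succ n ih =>
    intro l hl hNFB
    cases l with
    | nil => exact ⟨[], by simp, by simp, by simp, DEq.rfl⟩
    | cons w r =>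
      obtain ⟨a, x⟩ := w
      set P : Act × Proc Act → Bool := fun y => decide (y.1 = a) with hP
      have hperm : (r.filter P ++ r.filter fun y => !P y).Perm r := List.filter_append_perm P r
      set ra := r.filter P with hra
      set rb := r.filter (fun y => !P y) with hrb
      have hmem_ra : ∀ y ∈ ra, y ∈ r := fun y hy => (List.mem_filter.mp hy).1
      have hmem_rb : ∀ y ∈ rb, y ∈ r := fun y hy => (List.mem_filter.mp hy).1
      have hkeys_ra : ∀ y ∈ ra, y.1 = a := by
        intro y hy
        have := (List.mem_filter.mp hy).2
        simpa [hP] using this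
      have hkeys_rb : ∀ y ∈ rb, y.1 ≠ a := by
        intro y hy
        have := (List.mem_filter.mp hy).2
        simpa [hP] using this
      have hNFBr : ∀ y ∈ r, NFB y.2 := fun y hy => hNFB y (by simp [hy])
      have hxNFB : NFB x := hNFB (a, x) (by simp)
      -- normalize djList (x :: ra.map snd)
      obtain ⟨X, hXNFB, hXdeq⟩ := djList_norm (x :: ra.map Prod.snd) (by simp) (by
        intro p hp
        rcases List.mem_cons.mp hp with h | h
        · subst h; exact hxNFB
        · obtain ⟨y, hy, rfl⟩ := List.mem_map.mp h
          exact hNFBr y (hmem_ra y hy))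
      -- recursive call on rb
      have hrb_len : rb.length ≤ n := by
        have h1 : rb.length ≤ r.length := List.length_filter_le _ _
        have h2 : r.length + 1 ≤ n + 1 := by simpa using hl
        omega
      obtain ⟨rb', hnodup', hNFB', hkeys', hdeq'⟩ := ih rb hrb_len
        (fun y hy => hNFBr y (hmem_rb y hy))
      refine ⟨(a, X) :: rb', ?_, ?_, ?_, ?_⟩
      · simp only [List.map_cons, List.nodup_cons]
        refine ⟨fun hc => ?_, hnodup'⟩
        obtain ⟨y, hy, hya⟩ := List.mem_map.mp (hkeys' a hc)
        exact hkeys_rb y hy hya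
      · intro z hz
        rcases List.mem_cons.mp hz with h | h
        · subst h; exact hXNFB
        · exact hNFB' z h
      · intro b hb
        simp only [List.map_cons, List.mem_cons] at hb ⊢
        rcases hb with h | h
        · exact Or.inl h
        · right
          obtain ⟨y, hy, rfl⟩ := List.mem_map.mp (hkeys' b h)
          exact List.mem_map.mpr ⟨y, hmem_rb y hy, rfl⟩
      · calc ecPre ((a, x) :: r) ≋ ec (pre (ActT.act a) x) (ecPre r) := deq_ecPre_cons
          _ ≋ ec (pre (ActT.act a) x) (ecPre (ra ++ rb)) :=
              DEq.ec DEq.rfl (deq_ecPre_perm hperm.symm)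
          _ ≋ ec (pre (ActT.act a) x) (ec (ecPre ra) (ecPre rb)) :=
              DEq.ec DEq.rfl (deq_ecPre_append _ _)
          _ ≋ ec (ec (pre (ActT.act a) x) (ecPre ra)) (ecPre rb) := deq_ec_assoc.symm
          _ ≋ ec (pre (ActT.act a) (djList (x :: ra.map Prod.snd))) (ecPre rb) :=
              DEq.ec (merge_same ra a x hkeys_ra hxNFB.basic
                (fun y hy => (hNFBr y (hmem_ra y hy)).basic)) DEq.rfl
          _ ≋ ec (pre (ActT.act a) X) (ecPre rb') :=
              DEq.ec (DEq.pre hXdeq) hdeq'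
          _ ≋ ecPre ((a, X) :: rb') := deq_ecPre_cons.symm

/- distribution over disjunction -/

theorem dist_right {op : Proc Act → Proc Act → Proc Act}
    (hmono : ∀ {a a' b b'}, Deriv a a' → Deriv b b' → Deriv (op a b) (op a' b'))
    (hds : ∀ x y z, Deriv (op x (disj y z)) (disj (op x y) (op x z)))
    (x : Proc Act) : ∀ (L : List (Proc Act)), L ≠ [] →
    DEq (op x (djList L)) (djList (L.map (op x))) := by
  intro L
  induction L with
  | nil => exact fun h => absurd rfl h
  | cons p L ih =>
    intro _
    cases L with
    | nil => exact DEq.rfl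
    | cons q L =>
      have h1 : DEq (op x (djList (p :: q :: L))) (op x (disj p (djList (q :: L)))) :=
        ⟨hmono (Deriv.refl x) deq_djList_cons.1, hmono (Deriv.refl x) deq_djList_cons.2⟩
      have h2 : DEq (op x (disj p (djList (q :: L))))
          (disj (op x p) (op x (djList (q :: L)))) := by
        constructor
        · exact hds x p (djList (q :: L))
        · exact disj_lub (hmono (Deriv.refl x) Deriv.disj_le)
            (hmono (Deriv.refl x) (Deriv.trans Deriv.disj_le Deriv.disj_comm))
      have h3 : DEq (disj (op x p) (op x (djList (q :: L))))
          (disj (op x p) (djList ((q :: L).map (op x)))) :=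
        DEq.disj DEq.rfl (ih (by simp))
      exact ((h1.trans h2).trans h3).trans deq_djList_cons.symm

theorem choose_norm {L : List (Proc Act)} (h : ∀ c ∈ L, ∃ s, NFB s ∧ DEq c s) :
    ∃ L', List.Forall₂ DEq L L' ∧ ∀ s ∈ L', NFB s := by
  induction L with
  | nil => exact ⟨[], List.Forall₂.nil, by simp⟩
  | cons c L ih =>
    obtain ⟨s, hs, hdeq⟩ := h c (by simp)
    obtain ⟨L', hF, hL'⟩ := ih (fun d hd => h d (by simp [hd]))
    refine ⟨s :: L', List.Forall₂.cons hdeq hF, ?_⟩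
    intro t ht
    rcases List.mem_cons.mp ht with h' | h'
    · subst h'; exact hs
    · exact hL' t h'

theorem choose_normNF {L : List (Proc Act)} (h : ∀ c ∈ L, ∃ s, NF s ∧ DEq c s) :
    ∃ L', List.Forall₂ DEq L L' ∧ ∀ s ∈ L', NF s := by
  induction L with
  | nil => exact ⟨[], List.Forall₂.nil, by simp⟩
  | cons c L ih =>
    obtain ⟨s, hs, hdeq⟩ := h c (by simp)
    obtain ⟨L', hF, hL'⟩ := ih (fun d hd => h d (by simp [hd]))
    refine ⟨s :: L', List.Forall₂.cons hdeq hF, ?_⟩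
    intro t ht
    rcases List.mem_cons.mp ht with h' | h'
    · subst h'; exact hs
    · exact hL' t h'

theorem dj_norm_pointwise {L : List (Proc Act)} (hne : L ≠ [])
    (h : ∀ c ∈ L, ∃ s, NFB s ∧ DEq c s) : ∃ s, NFB s ∧ DEq (djList L) s := by
  obtain ⟨L', hF, hL'⟩ := choose_norm h
  have hne' : L' ≠ [] := by
    intro hc; subst hc
    exact hne (List.eq_nil_of_length_eq_zero (hF.length_eq.trans rfl))
  obtain ⟨s, hs, hdeq⟩ := djList_norm L' hne' hL'
  exact ⟨s, hs, (deq_djList_congr hF).trans hdeq⟩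

theorem dj_normNF_pointwise {L : List (Proc Act)} (hne : L ≠ [])
    (h : ∀ c ∈ L, ∃ s, NF s ∧ DEq c s) : ∃ s, NF s ∧ DEq (djList L) s := by
  obtain ⟨L', hF, hL'⟩ := choose_normNF h
  have hne' : L' ≠ [] := by
    intro hc; subst hc
    exact hne (List.eq_nil_of_length_eq_zero (hF.length_eq.trans rfl))
  obtain ⟨s, hs, hdeq⟩ := djList_normNF L' hne' hL'
  exact ⟨s, hs, (deq_djList_congr hF).trans hdeq⟩

/- NFB version of menu choose -/

theorem menu_choose_nfb : ∀ (l : List (Act × Proc Act)),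
    (∀ x ∈ l, ∃ y, NFB y ∧ DEq x.2 y) →
    ∃ l', l'.map Prod.fst = l.map Prod.fst ∧ (∀ x ∈ l', NFB x.2) ∧
      DEq (ecPre l) (ecPre l') := by
  intro l
  induction l with
  | nil => exact fun _ => ⟨[], rfl, by simp, DEq.rfl⟩
  | cons x l ih =>
    intro h
    obtain ⟨y, hy, hdeq⟩ := h x (by simp)
    obtain ⟨l', hkeys, hl', hdeq'⟩ := ih (fun z hz => h z (by simp [hz]))
    refine ⟨(x.1, y) :: l', by simp [hkeys], ?_, ?_⟩
    · intro z hz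
      rcases List.mem_cons.mp hz with h' | h'
      · subst h'; exact hy
      · exact hl' z h'
    · obtain ⟨a, x2⟩ := x
      calc ecPre ((a, x2) :: l) ≋ ec (pre (ActT.act a) x2) (ecPre l) := deq_ecPre_cons
        _ ≋ ec (pre (ActT.act a) y) (ecPre l') := DEq.ec (DEq.pre hdeq) hdeq'
        _ ≋ ecPre ((a, y) :: l') := deq_ecPre_cons.symm

/- alignment lemma for conjunction -/

theorem align_exists : ∀ (m₁ m₂ : List (Act × Proc Act)),
    (∀ p ∈ m₁, ∃ q ∈ m₂, q.1 = p.1) →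
    ∃ l : List (Act × Proc Act × Proc Act),
      l.map (fun x => (x.1, x.2.1)) = m₁ ∧ ∀ x ∈ l, (x.1, x.2.2) ∈ m₂ := by
  intro m₁ m₂
  induction m₁ with
  | nil => exact fun _ => ⟨[], rfl, by simp⟩
  | cons p m₁ ih =>
    intro h
    obtain ⟨q, hq, hq1⟩ := h p (by simp)
    obtain ⟨l, hl₁, hl₂⟩ := ih (fun r hr => h r (by simp [hr]))
    refine ⟨(p.1, p.2, q.2) :: l, by simp [hl₁], ?_⟩
    intro x hx
    rcases List.mem_cons.mp hx with h' | h'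
    · subst h'
      simpa [← hq1] using hq
    · exact hl₂ x h'

/- generic distribution of a binary operation over the disjunctions of
two normal forms, reducing normalization to the menu level. -/

theorem op_dist_to_menus {op : Proc Act → Proc Act → Proc Act}
    (hmono : ∀ {a a' b b' : Proc Act}, Deriv a a' → Deriv b b' → Deriv (op a b) (op a' b'))
    (hds : ∀ x y z : Proc Act, Deriv (op x (disj y z)) (disj (op x y) (op x z)))
    (hcomm : ∀ x y : Proc Act, DEq (op x y) (op y x))
    {u v : Proc Act} (hu : NFB u) (hv : NFB v)
    (h : ∀ (m m' : List (Act × Proc Act)), (m.map Prod.fst).Nodup →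
        (m'.map Prod.fst).Nodup →
        (∀ x ∈ m, NFB x.2) → (∀ x ∈ m', NFB x.2) →
        psize (ecPre m) ≤ psize u → psize (ecPre m') ≤ psize v →
        ∃ s, NF s ∧ DEq (op (ecPre m) (ecPre m')) s) :
    ∃ s, NF s ∧ DEq (op u v) s := by
  obtain ⟨ls₁, hne₁, hnodup₁, hsub₁, hu_eq⟩ :
      ∃ ls, ls ≠ [] ∧ (∀ l ∈ ls, (l.map Prod.fst).Nodup) ∧
        (∀ l ∈ ls, ∀ x ∈ l, NFB x.2) ∧ u = djList (ls.map ecPre) := by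
    cases hu with | mk ls hne hnodup hsub => exact ⟨ls, hne, hnodup, hsub, rfl⟩
  obtain ⟨ls₂, hne₂, hnodup₂, hsub₂, hv_eq⟩ :
      ∃ ls, ls ≠ [] ∧ (∀ l ∈ ls, (l.map Prod.fst).Nodup) ∧
        (∀ l ∈ ls, ∀ x ∈ l, NFB x.2) ∧ v = djList (ls.map ecPre) := by
    cases hv with | mk ls hne hnodup hsub => exact ⟨ls, hne, hnodup, hsub, rfl⟩
  have hdist1 : DEq (op u v) (djList ((ls₂.map ecPre).map (op u))) := by
    rw [hv_eq]
    exact dist_right hmono hds u (ls₂.map ecPre) (by simpa using hne₂)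
  have hpt : ∀ c ∈ (ls₂.map ecPre).map (op u), ∃ s, NF s ∧ DEq c s := by
    intro c hc
    obtain ⟨d, hd, rfl⟩ := List.mem_map.mp hc
    obtain ⟨m', hm', rfl⟩ := List.mem_map.mp hd
    have hdist2 : DEq (op u (ecPre m')) (djList ((ls₁.map ecPre).map (op (ecPre m')))) := by
      refine (hcomm _ _).trans ?_
      rw [hu_eq]
      exact dist_right hmono hds (ecPre m') (ls₁.map ecPre) (by simpa using hne₁)
    have hpt2 : ∀ c ∈ (ls₁.map ecPre).map (op (ecPre m')), ∃ s, NF s ∧ DEq c s := by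
      intro c hc
      obtain ⟨d, hd, rfl⟩ := List.mem_map.mp hc
      obtain ⟨m, hm, rfl⟩ := List.mem_map.mp hd
      obtain ⟨s, hs, hdeq⟩ := h m m' (hnodup₁ m hm) (hnodup₂ m' hm')
        (hsub₁ m hm) (hsub₂ m' hm')
        (by rw [hu_eq]; exact mem_psize_le_djList (List.mem_map.mpr ⟨m, hm, rfl⟩))
        (by rw [hv_eq]; exact mem_psize_le_djList (List.mem_map.mpr ⟨m', hm', rfl⟩))
      exact ⟨s, hs, (hcomm _ _).trans hdeq⟩
    obtain ⟨s, hs, hdeq⟩ := dj_normNF_pointwise (by simp [hne₁]) hpt2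
    exact ⟨s, hs, hdist2.trans hdeq⟩
  obtain ⟨s, hs, hdeq⟩ := dj_normNF_pointwise (L := (ls₂.map ecPre).map (op u))
    (by simp [hne₂]) hpt
  exact ⟨s, hs, hdist1.trans hdeq⟩

/- normalization of conjunctions of normal forms -/

theorem conjNorm : ∀ (N : ℕ) (u v : Proc Act), NFB u → NFB v →
    psize u + psize v < N → ∃ s, NF s ∧ DEq (conj u v) s := by
  intro N
  induction N with
  | zero => intro u v _ _ h; omega
  | succ N ih =>
    intro u v hu hv hN
    apply op_dist_to_menus (op := conj) (fun h h' => Deriv.mono_conj h h')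
      (fun _ _ _ => Deriv.ds_conj) (fun _ _ => deq_conj_comm) hu hv
    intro m m' hnd hnd' hsm hsm' hle hle'
    by_cases hset : {a | a ∈ m.map Prod.fst} = {a | a ∈ m'.map Prod.fst}
    · -- equal ready sets: align the menus
      have hmem : ∀ a, a ∈ m.map Prod.fst ↔ a ∈ m'.map Prod.fst := by
        intro a
        have := Set.ext_iff.mp hset a
        simpa using this
      obtain ⟨l, hl₁, hl₂⟩ := align_exists m m' (by
        intro p hp
        have : p.1 ∈ m'.map Prod.fst := (hmem p.1).mp (List.mem_map.mpr ⟨p, hp, rfl⟩)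
        obtain ⟨q, hq, hq1⟩ := List.mem_map.mp this
        exact ⟨q, hq, hq1⟩)
      have hkeys_l : l.map Prod.fst = m.map Prod.fst := by
        conv_rhs => rw [← hl₁]
        rw [List.map_map]
        rfl
      have hnodup_l : (l.map Prod.fst).Nodup := hkeys_l ▸ hnd
      -- the second projection is a permutation of m'
      have hproj2_keys : (l.map fun x => (x.1, x.2.2)).map Prod.fst = l.map Prod.fst := by
        rw [List.map_map]; rfl
      have hperm : (l.map fun x => (x.1, x.2.2)).Perm m' := by
        rw [List.perm_ext_iff_of_nodup
          (List.Nodup.of_map Prod.fst (by rw [hproj2_keys]; exact hnodup_l))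
          (List.Nodup.of_map Prod.fst hnd')]
        intro z
        constructor
        · intro hz
          obtain ⟨x, hx, rfl⟩ := List.mem_map.mp hz
          exact hl₂ x hx
        · intro hz
          have hz1 : z.1 ∈ l.map Prod.fst := by
            rw [hkeys_l]
            exact (hmem z.1).mpr (List.mem_map.mpr ⟨z, hz, rfl⟩)
          obtain ⟨x, hx, hx1⟩ := List.mem_map.mp hz1
          have hx2 : (x.1, x.2.2) ∈ m' := hl₂ x hx
          have : z.2 = x.2.2 := by
            apply keys_nodup_unique hnd' (a := z.1)
            · exact (Prod.mk.eta (p := z)) ▸ hz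
            · rw [hx1] at hx2; exact hx2
          refine List.mem_map.mpr ⟨x, hx, ?_⟩
          rw [hx1, ← this]
      -- provable equality to the conjoined menu
      have hstep : DEq (conj (ecPre m) (ecPre m'))
          (ecPre (l.map fun x => (x.1, conj x.2.1 x.2.2))) := by
        have h1 : DEq (conj (ecPre m) (ecPre m'))
            (conj (ecPre (l.map fun x => (x.1, x.2.1)))
              (ecPre (l.map fun x => (x.1, x.2.2)))) := by
          rw [hl₁]
          exact DEq.conj DEq.rfl (deq_ecPre_perm hperm).symm
        exact h1.trans ⟨Deriv.ecc3 l hnodup_l, Deriv.ecc2 l⟩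
      -- normalize each conjunction in the menu
      have hpt : ∀ z ∈ l.map fun x => (x.1, conj x.2.1 x.2.2),
          ∃ y, NF y ∧ DEq z.2 y := by
        intro z hz
        obtain ⟨x, hx, rfl⟩ := List.mem_map.mp hz
        have hx1 : (x.1, x.2.1) ∈ m := by rw [← hl₁]; exact List.mem_map.mpr ⟨x, hx, rfl⟩
        have hx2 : (x.1, x.2.2) ∈ m' := hl₂ x hx
        have hs1 : psize x.2.1 < psize (ecPre m) := snd_psize_lt_ecPre hx1
        have hs2 : psize x.2.2 < psize (ecPre m') := snd_psize_lt_ecPre hx2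
        exact ih x.2.1 x.2.2 (hsm _ hx1) (hsm' _ hx2) (by omega)
      obtain ⟨l', hkeys', hNF', hdeq'⟩ := menu_chooseNF _ hpt
      by_cases hbot : ∃ x ∈ l', x.2 = bot
      · exact ⟨bot, Or.inr rfl, (hstep.trans hdeq').trans (ecPre_collapse_bot l' hbot)⟩
      · push_neg at hbot
        refine ⟨ecPre l', Or.inl (NFB.single ?_ ?_), (hstep.trans hdeq')⟩
        · rw [hkeys', List.map_map]
          exact hnodup_l
        · intro x hx
          rcases hNF' x hx with h | h
          · exact h
          · exact absurd h (hbot x hx)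
    · exact ⟨bot, Or.inr rfl, ⟨Deriv.ecc1₁ m m' hset, Deriv.ecc1₂ m m' hset⟩⟩

/- normalization of parallel compositions of normal forms -/

theorem parNorm : ∀ (N : ℕ) (A : Set Act) (u v : Proc Act), NFB u → NFB v →
    psize u + psize v < N → ∃ s, NF s ∧ DEq (par A u v) s := by
  intro N
  induction N with
  | zero => intro A u v _ _ h; omega
  | succ N ih =>
    intro A u v hu hv hN
    apply op_dist_to_menus (op := par A) (fun h h' => Deriv.mono_par h h')
      (fun _ _ _ => Deriv.ds_par) (fun _ _ => deq_par_comm) hu hv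
    intro m m' hnd hnd' hsm hsm' hle hle'
    set L1 := (m.filter fun x => decide (x.1 ∉ A)).map
      fun x => (x.1, par A x.2 (ecPre m')) with hL1
    set L2 := (m'.filter fun x => decide (x.1 ∉ A)).map
      fun x => (x.1, par A (ecPre m) x.2) with hL2
    set L3 := (m.flatMap fun x => (m'.filter fun y => decide (y.1 = x.1 ∧ x.1 ∈ A)).map
      fun y => (x.1, par A x.2 y.2)) with hL3
    have hexp_eq : expTerm A m m' = ec (ec (ecPre L1) (ecPre L2)) (ecPre L3) := by
      simp only [hL1, hL2, hL3, expTerm, ecPre, List.map_map, List.map_flatMap,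
        Function.comp]
      rfl
    have hstep : DEq (par A (ecPre m) (ecPre m')) (ecPre ((L1 ++ L2) ++ L3)) := by
      refine DEq.trans ⟨Deriv.exp1 A m m', Deriv.exp2 A m m'
        (fun x hx => (hsm x hx).basic) (fun x hx => (hsm' x hx).basic)⟩ ?_
      rw [hexp_eq]
      exact ((deq_ecPre_append (L1 ++ L2) L3).trans
        (DEq.ec (deq_ecPre_append L1 L2) DEq.rfl)).symm
    have hmNFB : NFB (ecPre m) := NFB.single hnd hsm
    have hm'NFB : NFB (ecPre m') := NFB.single hnd' hsm'
    have hpt : ∀ z ∈ (L1 ++ L2) ++ L3, ∃ y, NF y ∧ DEq z.2 y := by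
      intro z hz
      rcases List.mem_append.mp hz with hz | hz
      · rcases List.mem_append.mp hz with hz | hz
        · obtain ⟨p, hp, rfl⟩ := List.mem_map.mp hz
          have hpm : p ∈ m := (List.mem_filter.mp hp).1
          have : psize p.2 < psize (ecPre m) := snd_psize_lt_ecPre hpm
          exact ih A p.2 (ecPre m') (hsm p hpm) hm'NFB (by omega)
        · obtain ⟨q, hq, rfl⟩ := List.mem_map.mp hz
          have hqm : q ∈ m' := (List.mem_filter.mp hq).1
          have : psize q.2 < psize (ecPre m') := snd_psize_lt_ecPre hqm
          exact ih A (ecPre m) q.2 hmNFB (hsm' q hqm) (by omega)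
      · obtain ⟨p, hp, hz2⟩ := List.mem_flatMap.mp hz
        obtain ⟨q, hq, rfl⟩ := List.mem_map.mp hz2
        have hqm : q ∈ m' := (List.mem_filter.mp hq).1
        have h1 : psize p.2 < psize (ecPre m) := snd_psize_lt_ecPre hp
        have h2 : psize q.2 < psize (ecPre m') := snd_psize_lt_ecPre hqm
        exact ih A p.2 q.2 (hsm p hp) (hsm' q hqm) (by omega)
    obtain ⟨l', hkeys', hNF', hdeq'⟩ := menu_chooseNF _ hpt
    by_cases hbot : ∃ x ∈ l', x.2 = bot
    · exact ⟨bot, Or.inr rfl, (hstep.trans hdeq').trans (ecPre_collapse_bot l' hbot)⟩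
    · push_neg at hbot
      have hNFB' : ∀ x ∈ l', NFB x.2 := by
        intro x hx
        rcases hNF' x hx with h | h
        · exact h
        · exact absurd h (hbot x hx)
      obtain ⟨l'', hnd'', hNFB'', _, hdeq''⟩ := menu_nodup l'.length l' le_rfl hNFB'
      exact ⟨ecPre l'', Or.inl (NFB.single hnd'' hNFB''),
        (hstep.trans hdeq').trans hdeq''⟩

/- normalization of external choices of normal forms -/

theorem ecNorm {u v : Proc Act} (hu : NFB u) (hv : NFB v) :
    ∃ s, NF s ∧ DEq (ec u v) s := by
  apply op_dist_to_menus (op := ec) (fun h h' => Deriv.mono_ec h h')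
    (fun _ _ _ => Deriv.ds_ec) (fun _ _ => deq_ec_comm) hu hv
  intro m m' hnd hnd' hsm hsm' _ _
  have hstep : DEq (ec (ecPre m) (ecPre m')) (ecPre (m ++ m')) :=
    (deq_ecPre_append m m').symm
  have hNFB : ∀ x ∈ m ++ m', NFB x.2 := by
    intro x hx
    rcases List.mem_append.mp hx with h | h
    · exact hsm x h
    · exact hsm' x h
  obtain ⟨l'', hnd'', hNFB'', _, hdeq''⟩ := menu_nodup (m ++ m').length (m ++ m') le_rfl hNFB
  exact ⟨ecPre l'', Or.inl (NFB.single hnd'' hNFB''), hstep.trans hdeq''⟩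

/-- Normal Form Theorem, DEq version. -/
theorem normNF (t : Proc Act) : ∃ s, NF s ∧ DEq t s := by
  induction t with
  | nil => exact ⟨nil, Or.inl NFB_nil, DEq.rfl⟩
  | bot => exact ⟨bot, Or.inr rfl, DEq.rfl⟩
  | pre α t ih =>
    obtain ⟨s, hs, hdeq⟩ := ih
    cases α with
    | tau => exact ⟨s, hs, deq_tau_pre.trans hdeq⟩
    | act a =>
      rcases hs with hs | hs
      · refine ⟨pre (ActT.act a) s, Or.inl ?_, DEq.pre hdeq⟩
        have h : pre (ActT.act a) s = djList ([[(a, s)]].map ecPre) := rfl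
        rw [h]
        exact NFB.mk [[(a, s)]] (by simp) (by simp) (by simpa using hs)
      · subst hs
        exact ⟨bot, Or.inr rfl, (DEq.pre hdeq).trans deq_pre_bot⟩
  | ec t₁ t₂ ih₁ ih₂ =>
    obtain ⟨s₁, hs₁, hd₁⟩ := ih₁
    obtain ⟨s₂, hs₂, hd₂⟩ := ih₂
    have hstep : DEq (ec t₁ t₂) (ec s₁ s₂) := DEq.ec hd₁ hd₂
    rcases hs₁ with h₁ | h₁
    · rcases hs₂ with h₂ | h₂
      · obtain ⟨s, hs, hdeq⟩ := ecNorm h₁ h₂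
        exact ⟨s, hs, hstep.trans hdeq⟩
      · subst h₂
        exact ⟨bot, Or.inr rfl, hstep.trans deq_ec_bot⟩
    · subst h₁
      exact ⟨bot, Or.inr rfl, hstep.trans (deq_ec_comm.trans deq_ec_bot)⟩
  | conj t₁ t₂ ih₁ ih₂ =>
    obtain ⟨s₁, hs₁, hd₁⟩ := ih₁
    obtain ⟨s₂, hs₂, hd₂⟩ := ih₂
    have hstep : DEq (conj t₁ t₂) (conj s₁ s₂) := DEq.conj hd₁ hd₂
    rcases hs₁ with h₁ | h₁
    · rcases hs₂ with h₂ | h₂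
      · obtain ⟨s, hs, hdeq⟩ := conjNorm (psize s₁ + psize s₂ + 1) s₁ s₂ h₁ h₂ (by omega)
        exact ⟨s, hs, hstep.trans hdeq⟩
      · subst h₂
        exact ⟨bot, Or.inr rfl, hstep.trans deq_conj_bot⟩
    · subst h₁
      exact ⟨bot, Or.inr rfl, hstep.trans (deq_conj_comm.trans deq_conj_bot)⟩
  | disj t₁ t₂ ih₁ ih₂ =>
    obtain ⟨s₁, hs₁, hd₁⟩ := ih₁
    obtain ⟨s₂, hs₂, hd₂⟩ := ih₂
    have hstep : DEq (disj t₁ t₂) (disj s₁ s₂) := DEq.disj hd₁ hd₂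
    rcases hs₁ with h₁ | h₁
    · rcases hs₂ with h₂ | h₂
      · obtain ⟨s, hs, hdeq⟩ := NFB.disj_norm h₁ h₂
        exact ⟨s, Or.inl hs, hstep.trans hdeq⟩
      · subst h₂
        exact ⟨s₁, Or.inl h₁, hstep.trans deq_disj_bot⟩
    · subst h₁
      exact ⟨s₂, hs₂, hstep.trans (deq_disj_comm.trans deq_disj_bot)⟩
  | par A t₁ t₂ ih₁ ih₂ =>
    obtain ⟨s₁, hs₁, hd₁⟩ := ih₁
    obtain ⟨s₂, hs₂, hd₂⟩ := ih₂
    have hstep : DEq (par A t₁ t₂) (par A s₁ s₂) := DEq.par hd₁ hd₂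
    rcases hs₁ with h₁ | h₁
    · rcases hs₂ with h₂ | h₂
      · obtain ⟨s, hs, hdeq⟩ := parNorm (psize s₁ + psize s₂ + 1) A s₁ s₂ h₁ h₂ (by omega)
        exact ⟨s, hs, hstep.trans hdeq⟩
      · subst h₂
        exact ⟨bot, Or.inr rfl, hstep.trans deq_par_bot⟩
    · subst h₁
      exact ⟨bot, Or.inr rfl, hstep.trans (deq_par_comm.trans deq_par_bot)⟩

end Proc

namespace Proc

/-- Normal Form Theorem: every process is provably equal to a normal form. -/
theorem stmt17 {Act : Type} (t : Proc Act) :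
    ∃ s : Proc Act, NF s ∧ Deriv t s ∧ Deriv s t := by
  obtain ⟨s, hs, hdeq⟩ := normNF t
  exact ⟨s, hs, hdeq.1, hdeq.2⟩

end Proc
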